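/- If A is a symmetric negative definite d×d matrix and B is symmetric negative semidefinite, then all eigenvalues of (A + B)⁻¹B lie in the interval [0, 1). -/
import Mathlib


open Matrix

/-- If `A` is symmetric negative definite and `B` is symmetric negative semidefinite,
then every real eigenvalue of `(A + B)⁻¹ * B` lies in `[0, 1)`. -/
theorem eigenvalues_in_Ico
    {d : ℕ} (A B : Matrix (Fin d) (Fin d) ℝ)
    (hA_symm : A.IsSymm) (hB_symm : B.IsSymm)
    (hA_negdef : ∀ x : Fin d → ℝ, x ≠ 0 → x ⬝ᵥ A.mulVec x < 0)
    (hB_negsemidef : ∀ x : Fin d → ℝ, x ⬝ᵥ B.mulVec x ≤ 0) :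
    ∀ μ ∈ spectrum ℝ ((A + B)⁻¹ * B), μ ∈ Set.Ico (0 : ℝ) 1 := by
  -- A + B is negative definite on nonzero vectors, hence invertible
  have hsum : ∀ x : Fin d → ℝ, x ≠ 0 → x ⬝ᵥ (A + B).mulVec x < 0 := by
    intro x hx
    rw [add_mulVec, dotProduct_add]
    have := hA_negdef x hx
    have := hB_negsemidef x
    linarith
  have hdet : (A + B).det ≠ 0 := by
    intro h
    obtain ⟨v, hv, hv0⟩ := (Matrix.exists_mulVec_eq_zero_iff).2 h
    have := hsum v hv
    rw [hv0, dotProduct_zero] at this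
    exact lt_irrefl 0 this
  intro μ hμ
  rw [spectrum.mem_iff] at hμ
  rw [Matrix.isUnit_iff_isUnit_det, isUnit_iff_ne_zero, not_not] at hμ
  obtain ⟨x, hx, hx0⟩ := (Matrix.exists_mulVec_eq_zero_iff).2 hμ
  -- hx0 : (algebraMap ℝ _ μ - (A+B)⁻¹ * B).mulVec x = 0
  have heig : ((A + B)⁻¹ * B).mulVec x = μ • x := by
    have : (algebraMap ℝ (Matrix (Fin d) (Fin d) ℝ) μ).mulVec x
        - ((A + B)⁻¹ * B).mulVec x = 0 := by
      rw [← sub_mulVec]; exact hx0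
    have h2 : (algebraMap ℝ (Matrix (Fin d) (Fin d) ℝ) μ).mulVec x = μ • x := by
      rw [Algebra.algebraMap_eq_smul_one, Matrix.smul_mulVec, Matrix.one_mulVec]
    rw [h2] at this
    exact (sub_eq_zero.mp this).symm
  have hBx : B.mulVec x = μ • (A + B).mulVec x := by
    have := congrArg (fun v => (A + B).mulVec v) heig
    simp only [mulVec_mulVec] at this
    rw [← mul_assoc, Matrix.mul_nonsing_inv _ (isUnit_iff_ne_zero.2 hdet), one_mul] at this
    rw [this, mulVec_smul]
  have key : x ⬝ᵥ B.mulVec x = μ * (x ⬝ᵥ (A + B).mulVec x) := by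
    rw [hBx, dotProduct_smul, smul_eq_mul]
  have ha := hA_negdef x hx
  have hb := hB_negsemidef x
  have hs := hsum x hx
  rw [add_mulVec, dotProduct_add] at key hs
  constructor
  · nlinarith
  · nlinarith
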